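/- Let t₁, t₂ > 0, t₁ ≠ t₂, and define A : (0,1] → [1,∞) by A(f₀) = 1 + (t₁ f₀^{-1/t₁} − t₂ f₀^{-1/t₂})/(t₂ − t₁). Then A is continuous on (0,1], and its inverse A^{-1} : [1,∞) → (0,1] is continuous and strictly decreasing. -/

import Mathlib

open Real

lemma area_aux (t₁ t₂ : ℝ) (h₁ : 0 < t₁) (h₂ : 0 < t₂) (hlt : t₁ < t₂)
    (A : ℝ → ℝ)
    (hA : ∀ f₀, A f₀ = 1 + (t₁ * f₀ ^ (-(1 / t₁)) - t₂ * f₀ ^ (-(1 / t₂))) / (t₂ - t₁)) :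
    ContinuousOn A (Set.Ioc 0 1) ∧ StrictAntiOn A (Set.Ioc 0 1) := by
  have hAe : A = fun y : ℝ => 1 + (t₁ * y ^ (-(1 / t₁)) - t₂ * y ^ (-(1 / t₂))) / (t₂ - t₁) :=
    funext hA
  have hcont : ContinuousOn A (Set.Ioc 0 1) := by
    intro x hx
    have hx0 : x ≠ 0 := ne_of_gt hx.1
    have hc1 : ContinuousAt (fun y : ℝ => y ^ (-(1 / t₁))) x :=
      Real.continuousAt_rpow_const x _ (Or.inl hx0)
    have hc2 : ContinuousAt (fun y : ℝ => y ^ (-(1 / t₂))) x :=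
      Real.continuousAt_rpow_const x _ (Or.inl hx0)
    have : ContinuousAt A x := by
      rw [hAe]
      exact continuousAt_const.add
        (((continuousAt_const.mul hc1).sub (continuousAt_const.mul hc2)).div_const _)
    exact this.continuousWithinAt
  refine ⟨hcont, strictAntiOn_of_deriv_neg (convex_Ioc 0 1) hcont ?_⟩
  intro x hx
  rw [interior_Ioc] at hx
  have hx0 : x ≠ 0 := ne_of_gt hx.1
  have hd1 : HasDerivAt (fun y : ℝ => y ^ (-(1 / t₁))) (-(1 / t₁) * x ^ (-(1 / t₁) - 1)) x :=
    Real.hasDerivAt_rpow_const (Or.inl hx0)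
  have hd2 : HasDerivAt (fun y : ℝ => y ^ (-(1 / t₂))) (-(1 / t₂) * x ^ (-(1 / t₂) - 1)) x :=
    Real.hasDerivAt_rpow_const (Or.inl hx0)
  have hdA : HasDerivAt A ((x ^ (-(1 / t₂) - 1) - x ^ (-(1 / t₁) - 1)) / (t₂ - t₁)) x := by
    rw [hAe]
    have := (((hd1.const_mul t₁).sub (hd2.const_mul t₂)).div_const (t₂ - t₁)).const_add 1
    have ht₁ : t₁ ≠ 0 := ne_of_gt h₁
    have ht₂ : t₂ ≠ 0 := ne_of_gt h₂
    have key : ∀ u v : ℝ, (t₁ * (-(1 / t₁) * u) - t₂ * (-(1 / t₂) * v)) / (t₂ - t₁)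
        = (v - u) / (t₂ - t₁) := by
      intro u v
      congr 1
      field_simp
      ring
    rw [key] at this
    exact this
  rw [hdA.deriv]
  have hexp : -(1 / t₁) - 1 < -(1 / t₂) - 1 := by
    have := one_div_lt_one_div_of_lt h₁ hlt
    linarith
  have hnum : x ^ (-(1 / t₂) - 1) < x ^ (-(1 / t₁) - 1) :=
    Real.rpow_lt_rpow_of_exponent_gt hx.1 hx.2 hexp
  exact div_neg_of_neg_of_pos (sub_neg.mpr hnum) (sub_pos.mpr hlt)

theorem area_continuous_and_inverse (t₁ t₂ : ℝ) (h₁ : 0 < t₁) (h₂ : 0 < t₂)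
    (hne : t₁ ≠ t₂)
    (A : ℝ → ℝ)
    (hA : ∀ f₀, A f₀ = 1 + (t₁ * f₀ ^ (-(1 / t₁)) - t₂ * f₀ ^ (-(1 / t₂))) / (t₂ - t₁)) :
    ContinuousOn A (Set.Ioc 0 1) ∧
    ∀ B : ℝ → ℝ,
      (∀ f₀ ∈ Set.Ioc (0 : ℝ) 1, B (A f₀) = f₀) →
      (∀ r ∈ Set.Ici (1 : ℝ), B r ∈ Set.Ioc (0 : ℝ) 1 ∧ A (B r) = r) →
      ContinuousOn B (Set.Ici 1) ∧ StrictAntiOn B (Set.Ici 1) := by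
  obtain ⟨hc, hanti⟩ : ContinuousOn A (Set.Ioc 0 1) ∧ StrictAntiOn A (Set.Ioc 0 1) := by
    rcases lt_or_gt_of_ne hne with h | h
    · exact area_aux t₁ t₂ h₁ h₂ h A hA
    · refine area_aux t₂ t₁ h₂ h₁ h A ?_
      intro f₀
      rw [hA f₀]
      have h12 : t₂ - t₁ ≠ 0 := sub_ne_zero.mpr (Ne.symm hne)
      have h21 : t₁ - t₂ ≠ 0 := sub_ne_zero.mpr hne
      congr 1
      rw [div_eq_div_iff h12 h21]
      ring
  refine ⟨hc, ?_⟩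
  intro B hB1 hB2
  have hBanti : StrictAntiOn B (Set.Ici 1) := by
    intro r hr s hs hrs
    obtain ⟨hBr, hABr⟩ := hB2 r hr
    obtain ⟨hBs, hABs⟩ := hB2 s hs
    by_contra hle
    push_neg at hle
    rcases eq_or_lt_of_le hle with heq | hlt'
    · rw [heq] at hABr
      exact absurd (hABr.symm.trans hABs) (ne_of_lt hrs)
    · have h := hanti hBr hBs hlt'
      rw [hABr, hABs] at h
      exact absurd hrs (not_lt.mpr h.le)
  refine ⟨?_, hBanti⟩
  have hBmem : ∀ r ∈ Set.Ici (1:ℝ), B r ∈ Set.Ioc (0:ℝ) 1 := fun r hr => (hB2 r hr).1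
  have hB1mem : B 1 ∈ Set.Ioc (0:ℝ) 1 := hBmem 1 Set.self_mem_Ici
  have hsurj : ∀ y : ℝ, 0 < y → y ≤ B 1 → ∃ r ∈ Set.Ici (1:ℝ), B r = y := by
    intro y hy0 hy1
    have hymem : y ∈ Set.Ioc (0:ℝ) 1 := ⟨hy0, hy1.trans hB1mem.2⟩
    have hAy : (1:ℝ) ≤ A y := by
      rcases eq_or_lt_of_le hy1 with heq | hlt'
      · rw [heq, (hB2 1 Set.self_mem_Ici).2]
      · have h := hanti hymem hB1mem hlt'
        rw [(hB2 1 Set.self_mem_Ici).2] at h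
        exact h.le
    exact ⟨A y, hAy, hB1 y hymem⟩
  set C : ℝ → ℝ := fun r => -(B r) with hC
  have hCmono : StrictMonoOn C (Set.Ici 1) := fun r hr s hs hrs =>
    neg_lt_neg (hBanti hr hs hrs)
  have hright : ∀ a ∈ Set.Ici (1:ℝ), ∀ b > C a, ∃ c ∈ Set.Ici (1:ℝ),
      C c ∈ Set.Ioc (C a) b := by
    intro a ha b hb
    have hBa := hBmem a ha
    have hBaB1 : B a ≤ B 1 := by
      rcases eq_or_lt_of_le (Set.mem_Ici.mp ha) with heq | hgt
      · rw [← heq]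
      · exact (hBanti Set.self_mem_Ici ha hgt).le
    have hb' : -b < B a := by
      simp only [hC] at hb
      linarith
    set y := max (-b) (B a / 2) with hy
    have hy0 : 0 < y := lt_max_of_lt_right (half_pos hBa.1)
    have hyBa : y < B a := max_lt hb' (half_lt_self hBa.1)
    obtain ⟨r, hr, hry⟩ := hsurj y hy0 (hyBa.le.trans hBaB1)
    refine ⟨r, hr, ?_, ?_⟩
    · simp only [hC, hry]
      linarith
    · simp only [hC, hry]
      have : -b ≤ y := le_max_left _ _
      linarith
  have hleft : ∀ a : ℝ, 1 < a → ∀ b < C a, ∃ c ∈ Set.Ici (1:ℝ),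
      C c ∈ Set.Ico b (C a) := by
    intro a ha b hb
    have hBa := hBmem a ha.le
    have hBaB1 : B a < B 1 := hBanti Set.self_mem_Ici ha.le ha
    have hb' : B a < -b := by
      simp only [hC] at hb
      linarith
    set y := min (-b) ((B a + B 1) / 2) with hy
    have hyBa : B a < y := lt_min hb' (by linarith)
    have hy0 : 0 < y := lt_trans hBa.1 hyBa
    have hyB1 : y ≤ B 1 := le_trans (min_le_right _ _) (by linarith)
    obtain ⟨r, hr, hry⟩ := hsurj y hy0 hyB1
    refine ⟨r, hr, ?_, ?_⟩
    · simp only [hC, hry]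
      have : y ≤ -b := min_le_left _ _
      linarith
    · simp only [hC, hry]
      linarith
  have hCcont : ContinuousOn C (Set.Ici 1) := by
    intro a ha
    rcases eq_or_lt_of_le (Set.mem_Ici.mp ha) with heq | hgt
    · rw [← heq]
      exact hCmono.continuousWithinAt_right_of_exists_between self_mem_nhdsWithin
        (hright 1 Set.self_mem_Ici)
    · have : ContinuousAt C a :=
        hCmono.continuousAt_of_exists_between
          (Filter.mem_of_superset (Ioi_mem_nhds hgt) Set.Ioi_subset_Ici_self)
          (hleft a hgt) (hright a ha)
      exact this.continuousWithinAt
  have := hCcont.neg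
  simpa only [hC, neg_neg, Pi.neg_def] using this
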